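/- Let Y be a linear threshold unit with n binary inputs and threshold k (1 ≤ k ≤ n), and let v ∈ {0,1}^n be an actual input state with Σ_i v_i ≥ k (so the actual outcome is Y = 1). Then the actual-cause candidate set x*(1) of the occurrence {Y = 1} is exactly the set of restrictions v|S with |S| = k and v_i = 1 for every i ∈ S. In particular, the actual cause of {Y = 1} is an occurrence consisting of exactly k inputs, all in state 1. -/

import Mathlib

open Finset

/-- Number of inputs in state `1` (true). -/
def ones {n : ℕ} (u : Fin n → Bool) : ℕ := (univ.filter fun i => u i = true).card

/-- Linear threshold unit with threshold `k`: outputs `1` iff at least `k` inputs are `1`. -/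
def LTU {n : ℕ} (k : ℕ) (u : Fin n → Bool) : Bool := decide (k ≤ ones u)

/-- Effect probability `π(y | v|S) = 2^{-(n-|S|)} · #{u : u agrees with v on S ∧ Y u = y}`. -/
noncomputable def effProb {n : ℕ} (Y : (Fin n → Bool) → Bool) (v : Fin n → Bool)
    (S : Finset (Fin n)) (y : Bool) : ℝ :=
  ((univ.filter fun u : Fin n → Bool => (∀ i ∈ S, u i = v i) ∧ Y u = y).card : ℝ) /
    2 ^ (n - S.card)

/-- Cause ratio `ρ(v|S) = log₂(π(y | v|S) / π(y))`, where `π(y) = π(y | v|∅)`. -/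
noncomputable def causeRatio {n : ℕ} (Y : (Fin n → Bool) → Bool) (v : Fin n → Bool)
    (S : Finset (Fin n)) (y : Bool) : ℝ :=
  Real.logb 2 (effProb Y v S y / effProb Y v ∅ y)

/-- The actual-cause candidate set `x*(y)`: occurrences `v|S` maximizing the cause ratio `ρ`
over all subsets `S ⊆ {1,…,n}` and such that no proper subset attains the maximum. -/
def causeCandidates {n : ℕ} (Y : (Fin n → Bool) → Bool) (v : Fin n → Bool) (y : Bool) :
    Set (Finset (Fin n)) :=
  {S | (∀ T : Finset (Fin n), causeRatio Y v T y ≤ causeRatio Y v S y) ∧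
    ∀ T ⊂ S, causeRatio Y v T y ≠ causeRatio Y v S y}

lemma card_agree {n : ℕ} (v : Fin n → Bool) (S : Finset (Fin n)) :
    (univ.filter fun u : Fin n → Bool => ∀ i ∈ S, u i = v i).card = 2 ^ (n - S.card) := by
  rw [← Fintype.card_subtype]
  have e : {u : Fin n → Bool // ∀ i ∈ S, u i = v i} ≃ ({i : Fin n // i ∉ S} → Bool) :=
    { toFun := fun u i => u.1 i.1
      invFun := fun w => ⟨fun i => if h : i ∈ S then v i else w ⟨i, h⟩, fun i hi => dif_pos hi⟩
      left_inv := fun u => by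
        ext i
        by_cases h : i ∈ S
        · simp [h, u.2 i h]
        · simp [h]
      right_inv := fun w => by
        ext i
        simp [i.2] }
  rw [Fintype.card_congr e]
  have : Fintype.card {i : Fin n // i ∉ S} = n - S.card := by
    simp [Fintype.card_subtype_compl]
  simp [Fintype.card_fun, this]

lemma effProb_pos {n k : ℕ} (v : Fin n → Bool) (hv : k ≤ ones v) (S : Finset (Fin n)) :
    0 < effProb (LTU k) v S true := by
  have hne : (univ.filter fun u : Fin n → Bool =>
      (∀ i ∈ S, u i = v i) ∧ LTU k u = true).Nonempty := by
    refine ⟨fun i => if i ∈ S then v i else true, ?_⟩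
    simp only [mem_filter, mem_univ, true_and]
    constructor
    · intro i hi; simp [hi]
    · have hmono : ones v ≤ ones (fun i => if i ∈ S then v i else true) := by
        apply card_le_card
        intro i hi
        simp only [mem_filter, mem_univ, true_and] at hi ⊢
        by_cases h : i ∈ S <;> simp [h, hi]
      simp only [LTU, decide_eq_true_eq]
      omega
  have h1 : (0 : ℝ) < (univ.filter fun u : Fin n → Bool =>
      (∀ i ∈ S, u i = v i) ∧ LTU k u = true).card := by
    exact_mod_cast card_pos.mpr hne
  exact div_pos h1 (by positivity)

lemma effProb_le_one {n : ℕ} (Y : (Fin n → Bool) → Bool) (v : Fin n → Bool)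
    (S : Finset (Fin n)) (y : Bool) : effProb Y v S y ≤ 1 := by
  rw [effProb, div_le_one (by positivity)]
  have hsub : (univ.filter fun u : Fin n → Bool => (∀ i ∈ S, u i = v i) ∧ Y u = y) ⊆
      (univ.filter fun u : Fin n → Bool => ∀ i ∈ S, u i = v i) := by
    intro u hu
    simp only [mem_filter, mem_univ, true_and] at hu ⊢
    exact hu.1
  have := card_le_card hsub
  rw [card_agree] at this
  calc ((univ.filter fun u : Fin n → Bool => (∀ i ∈ S, u i = v i) ∧ Y u = y).card : ℝ)
      ≤ (2 ^ (n - S.card) : ℕ) := by exact_mod_cast this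
    _ = 2 ^ (n - S.card) := by push_cast; ring

lemma effProb_eq_one {n k : ℕ} (v : Fin n → Bool) (S : Finset (Fin n))
    (h : k ≤ (S.filter fun i => v i = true).card) : effProb (LTU k) v S true = 1 := by
  have key : (univ.filter fun u : Fin n → Bool => (∀ i ∈ S, u i = v i) ∧ LTU k u = true) =
      (univ.filter fun u : Fin n → Bool => ∀ i ∈ S, u i = v i) := by
    apply filter_congr
    intro u _
    simp only [and_iff_left_iff_imp]
    intro hagree
    have hsub : (S.filter fun i => v i = true) ⊆ (univ.filter fun i => u i = true) := by
      intro i hi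
      simp only [mem_filter, mem_univ, true_and] at hi ⊢
      rw [hagree i hi.1]; exact hi.2
    have := card_le_card hsub
    simp only [LTU, decide_eq_true_eq, ones]
    exact decide_eq_true (le_trans h this)
  rw [effProb, key, card_agree]
  rw [div_eq_one_iff_eq (by positivity)]
  push_cast; ring

lemma effProb_lt_one {n k : ℕ} (v : Fin n → Bool) (S : Finset (Fin n))
    (h : (S.filter fun i => v i = true).card < k) : effProb (LTU k) v S true < 1 := by
  rw [effProb, div_lt_one (by positivity)]
  have hsub : (univ.filter fun u : Fin n → Bool => (∀ i ∈ S, u i = v i) ∧ LTU k u = true) ⊂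
      (univ.filter fun u : Fin n → Bool => ∀ i ∈ S, u i = v i) := by
    rw [ssubset_iff_of_subset]
    · refine ⟨fun i => if i ∈ S then v i else false, ?_, ?_⟩
      · simp only [mem_filter, mem_univ, true_and]
        intro i hi; simp [hi]
      · simp only [mem_filter, mem_univ, true_and, not_and]
        intro _
        have heq : (univ.filter fun i => (if i ∈ S then v i else false) = true) =
            (S.filter fun i => v i = true) := by
          ext i
          simp only [mem_filter, mem_univ, true_and]
          by_cases hS : i ∈ S <;> simp [hS]
        have : ones (fun i => if i ∈ S then v i else false) =
            (S.filter fun i => v i = true).card := by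
          rw [ones, heq]
        simp only [LTU, decide_eq_true_eq, this]
        omega
    · intro u hu
      simp only [mem_filter, mem_univ, true_and] at hu ⊢
      exact hu.1
  have := card_lt_card hsub
  rw [card_agree] at this
  calc ((univ.filter fun u : Fin n → Bool => (∀ i ∈ S, u i = v i) ∧ LTU k u = true).card : ℝ)
      < (2 ^ (n - S.card) : ℕ) := by exact_mod_cast this
    _ = 2 ^ (n - S.card) := by push_cast; ring

/-- The actual cause of `{Y = 1}` for an LTU with `Σ v_i ≥ k` is an occurrence consisting of
exactly `k` inputs, all in state `1`; the candidate set is exactly the set of such `v|S`. -/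
theorem ltu_actual_cause_of_on_state (n k : ℕ) (hk1 : 1 ≤ k) (hkn : k ≤ n)
    (v : Fin n → Bool) (hv : k ≤ ones v) :
    causeCandidates (LTU k) v true =
      {S : Finset (Fin n) | S.card = k ∧ ∀ i ∈ S, v i = true} := by
  set p : Finset (Fin n) → ℝ := fun S => effProb (LTU k) v S true with hp
  have hppos : ∀ S, 0 < p S := fun S => effProb_pos v hv S
  have hple : ∀ S, p S ≤ 1 := fun S => effProb_le_one _ v S true
  have hp0 : 0 < p ∅ := hppos ∅
  have hr : ∀ S, causeRatio (LTU k) v S true = Real.logb 2 (p S / p ∅) := fun S => rfl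
  have hrle : ∀ S T : Finset (Fin n), p T ≤ p S →
      causeRatio (LTU k) v T true ≤ causeRatio (LTU k) v S true := by
    intro S T h
    rw [hr, hr]
    exact Real.logb_le_logb_of_le one_lt_two (div_pos (hppos T) hp0) (by gcongr)
  have hrlt : ∀ S T : Finset (Fin n), p T < p S →
      causeRatio (LTU k) v T true < causeRatio (LTU k) v S true := by
    intro S T h
    rw [hr, hr]
    exact Real.logb_lt_logb one_lt_two (div_pos (hppos T) hp0)
      (by gcongr)
  -- ones on a subset
  have honesfull : ∀ S : Finset (Fin n), S.card = k → (∀ i ∈ S, v i = true) → p S = 1 := by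
    intro S hc hall
    apply effProb_eq_one
    have : S.filter (fun i => v i = true) = S := filter_eq_self.mpr hall
    rw [this, hc]
  ext S
  simp only [causeCandidates, Set.mem_setOf_eq]
  constructor
  · rintro ⟨hmax, hmin⟩
    -- S achieves the maximum, so p S = 1
    obtain ⟨S₀, hS₀sub, hS₀card⟩ :=
      exists_subset_card_eq (s := univ.filter fun i => v i = true) (n := k) (by simpa [ones] using hv)
    have hS₀all : ∀ i ∈ S₀, v i = true := fun i hi => by
      have := hS₀sub hi; simp only [mem_filter] at this; exact this.2
    have hpS₀ : p S₀ = 1 := honesfull S₀ hS₀card hS₀all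
    have hpS : p S = 1 := by
      by_contra hne
      have hlt : p S < 1 := lt_of_le_of_ne (hple S) hne
      have := hrlt S₀ S (hpS₀ ▸ hlt)
      exact absurd (hmax S₀) (not_le.mpr this)
    have hones : k ≤ (S.filter fun i => v i = true).card := by
      by_contra hlt
      push_neg at hlt
      exact absurd hpS (ne_of_lt (effProb_lt_one v S hlt))
    obtain ⟨T, hTsub, hTcard⟩ :=
      exists_subset_card_eq (s := S.filter fun i => v i = true) (n := k) hones
    have hTS : T ⊆ S := hTsub.trans (filter_subset _ _)
    have hTall : ∀ i ∈ T, v i = true := fun i hi => by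
      have := hTsub hi; simp only [mem_filter] at this; exact this.2
    have hpT : p T = 1 := honesfull T hTcard hTall
    by_cases hTeq : T = S
    · subst hTeq
      exact ⟨hTcard, hTall⟩
    · exfalso
      have hss : T ⊂ S := ssubset_of_subset_of_ne hTS hTeq
      apply hmin T hss
      rw [hr, hr, hpT, hpS]
  · rintro ⟨hc, hall⟩
    have hpS : p S = 1 := honesfull S hc hall
    constructor
    · intro T
      exact hrle S T (hpS ▸ hple T)
    · intro T hT
      have hTcard : T.card < k := hc ▸ card_lt_card hT
      have hones : (T.filter fun i => v i = true).card < k :=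
        lt_of_le_of_lt (card_le_card (filter_subset _ _)) hTcard
      have hpT : p T < 1 := effProb_lt_one v T hones
      exact ne_of_lt (hrlt S T (hpS ▸ hpT))
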